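/- If 3 ≤ t ≤ n−2, then Opt_0 strictly dominates the protocol P0_opt of Halpern, Moses, and Waarts; moreover there exists an adversary with exactly t crash failures for which every correct process decides 1 after 3 rounds in Opt_0 but only after t+1 rounds in P0_opt. In particular, P0_opt is beatable. -/
import Mathlib


attribute [local instance] Classical.propDecidable

/-- An adversary in the synchronous crash-failure model: an input vector of binary
initial values, a failure pattern given by the delivery relation `F` (`F m j i` means
the message sent by `j` at time `m` is delivered to `i` at time `m+1`, i.e. in round `m+1`),
and a crash round for each process (`⊤` meaning the process never crashes).
A process behaves correctly before its crashing round and sends nothing afterwards;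
during its crashing round it may send to an arbitrary subset. -/
structure Adversary (n : ℕ) where
  init : Fin n → Bool
  F : ℕ → Fin n → Fin n → Prop
  crash : Fin n → ℕ∞
  crash_pos : ∀ j, 1 ≤ crash j
  before_crash : ∀ (m : ℕ) (j i : Fin n), ((m + 1 : ℕ) : ℕ∞) < crash j → F m j i
  after_crash : ∀ (m : ℕ) (j i : Fin n), crash j < ((m + 1 : ℕ) : ℕ∞) → ¬ F m j i

namespace Adversary

variable {n : ℕ}

/-- A process is faulty if it crashes at some point. -/
def Faulty (A : Adversary n) (j : Fin n) : Prop := A.crash j ≠ ⊤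

/-- The number `f` of actual failures in the run determined by the adversary. -/
noncomputable def numFaults (A : Adversary n) : ℕ := {j | A.Faulty j}.ncard

/-- A process is active at time `m` if it has not crashed before time `m`. -/
def Active (A : Adversary n) (j : Fin n) (m : ℕ) : Prop := ((m : ℕ) : ℕ∞) < A.crash j

end Adversary

/-- `Seen A ⟨j,ℓ⟩ ⟨i,m⟩`: node `⟨j,ℓ⟩` is in the view (communication graph) of node
`⟨i,m⟩`, i.e. there is a message chain from `⟨j,ℓ⟩` to `⟨i,m⟩`. -/
inductive Seen {n : ℕ} (A : Adversary n) : Fin n × ℕ → Fin n × ℕ → Prop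
  | refl (p : Fin n × ℕ) : Seen A p p
  | self {p : Fin n × ℕ} {i : Fin n} {m : ℕ} : Seen A p (i, m) → Seen A p (i, m + 1)
  | step {p : Fin n × ℕ} {j i : Fin n} {m : ℕ} : Seen A p (j, m) → A.F m j i →
      Seen A p (i, m + 1)

open Adversary

/-- Two adversaries give process `i` the same view at time `m` in a full-information
protocol: the same nodes are seen, with the same initial values at seen time-0 nodes
and the same incoming edges at seen later nodes. -/
def sameView {n : ℕ} (A B : Adversary n) (i : Fin n) (m : ℕ) : Prop :=
  (∀ p, Seen A p (i, m) ↔ Seen B p (i, m)) ∧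
  (∀ j, Seen A (j, 0) (i, m) → A.init j = B.init j) ∧
  (∀ (k : ℕ) (j j' : Fin n), Seen A (j', k + 1) (i, m) → (A.F k j j' ↔ B.F k j j'))

/-- The local state of (active) process `i` at time `m` is the same under both
adversaries: `i` is active in both and has the same full-information view. -/
def sameLocal {n : ℕ} (A B : Adversary n) (i : Fin n) (m : ℕ) : Prop :=
  A.Active i m ∧ B.Active i m ∧ sameView A B i m

/-- The runs of the system are those generated by adversaries with at most `t` crashes. -/
def Valid {n : ℕ} (t : ℕ) (A : Adversary n) : Prop := A.numFaults ≤ t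

/-- Knowledge in the full-information protocol: `i` knows the fact `φ` at time `m`
iff `φ` holds at time `m` in every run (with at most `t` failures) in which `i` has
the same local state. -/
def Knows {n : ℕ} (t : ℕ) (φ : Adversary n → ℕ → Prop) (A : Adversary n) (i : Fin n)
    (m : ℕ) : Prop :=
  ∀ B : Adversary n, Valid t B → sameLocal A B i m → φ B m

/-- The fact `∃v`: some process has initial value `v`. -/
def existsVal {n : ℕ} (v : Bool) : Adversary n → ℕ → Prop := fun A _ => ∃ j, A.init j = v

/-- Node `⟨j',m'⟩` is revealed to `⟨i,m⟩`: either it is seen by `⟨i,m⟩`, or for some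
seen node `⟨i',m'⟩` the edge `(⟨j',m'-1⟩,⟨i',m'⟩)` is absent from `i`'s view
(proving that `j'` crashed before time `m'`). -/
def RevealedNode {n : ℕ} (A : Adversary n) (j' : Fin n) (m' : ℕ) (i : Fin n) (m : ℕ) :
    Prop :=
  Seen A (j', m') (i, m) ∨
  ∃ (i' : Fin n) (k : ℕ), m' = k + 1 ∧ Seen A (i', k + 1) (i, m) ∧ ¬ A.F k j' i'

/-- Time `k` is revealed to `⟨i,m⟩` if every node `⟨j',k⟩` is revealed to `⟨i,m⟩`. -/
def RevealedTime {n : ℕ} (A : Adversary n) (k : ℕ) (i : Fin n) (m : ℕ) : Prop :=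
  ∀ j', RevealedNode A j' k i m

/-- A hidden path w.r.t. `⟨i,m⟩`: for each `k ≤ m` a node `⟨j_k,k⟩` not revealed to `⟨i,m⟩`. -/
def HiddenPath {n : ℕ} (A : Adversary n) (i : Fin n) (m : ℕ) : Prop :=
  ∃ js : ℕ → Fin n, ∀ k ≤ m, ¬ RevealedNode A (js k) k i m

/-- `not-known(∃0)`: no process active at time `m` knows `∃0`. -/
def notKnown0 {n : ℕ} (t : ℕ) : Adversary n → ℕ → Prop :=
  fun A m => ∀ j, A.Active j m → ¬ Knows t (existsVal false) A j m

/-- A (full-information, deterministic) decision protocol, described by the decision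
status function: `P A i m = some v` iff by time `m` process `i` has decided `v`
in the run determined by adversary `A`. -/
abbrev ProtoDec (n : ℕ) : Type := Adversary n → Fin n → ℕ → Option Bool

/-- Sanity conditions making a decision-status function a protocol: decisions are
irrevocable, and (for active processes) depend only on the local state. -/
def IsProtocol {n : ℕ} (t : ℕ) (P : ProtoDec n) : Prop :=
  (∀ A i m v, P A i m = some v → P A i (m + 1) = some v) ∧
  (∀ A B i m, Valid t A → Valid t B → sameLocal A B i m → P A i m = P B i m)

/-- Process `i` performs the action `decide(v)` at time `m`: it is decided on `v`
at `m` and was undecided before. -/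
def DecidesAt {n : ℕ} (P : ProtoDec n) (A : Adversary n) (i : Fin n) (m : ℕ) (v : Bool) :
    Prop :=
  P A i m = some v ∧ ∀ k < m, P A i k = none

/-- Decision: every correct process eventually decides. -/
def Decision {n : ℕ} (t : ℕ) (P : ProtoDec n) : Prop :=
  ∀ A : Adversary n, Valid t A → ∀ i, ¬ A.Faulty i → ∃ m, P A i m ≠ none

/-- Validity: if all initial values are `v` then correct processes decide `v`. -/
def Validity {n : ℕ} (t : ℕ) (P : ProtoDec n) : Prop :=
  ∀ A : Adversary n, Valid t A → ∀ v : Bool, (∀ j, A.init j = v) →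
    ∀ i m w, ¬ A.Faulty i → P A i m = some w → w = v

/-- Agreement: all correct processes decide on the same value. -/
def Agreement {n : ℕ} (t : ℕ) (P : ProtoDec n) : Prop :=
  ∀ A : Adversary n, Valid t A → ∀ i j m m' v w, ¬ A.Faulty i → ¬ A.Faulty j →
    P A i m = some v → P A j m' = some w → v = w

def ConsensusSolves {n : ℕ} (t : ℕ) (P : ProtoDec n) : Prop :=
  Decision t P ∧ Validity t P ∧ Agreement t P

/-- Uniform Agreement: all processes that decide (faulty or not) decide the same value. -/
def UniformAgreement {n : ℕ} (t : ℕ) (P : ProtoDec n) : Prop :=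
  ∀ A : Adversary n, Valid t A → ∀ i j m m' v w,
    P A i m = some v → P A j m' = some w → v = w

def UniformConsensusSolves {n : ℕ} (t : ℕ) (P : ProtoDec n) : Prop :=
  Decision t P ∧ Validity t P ∧ UniformAgreement t P

/-- `Q` dominates `P`: for every adversary and process, if `i` has decided by time `m`
in `P` then `i` has decided by time `m` in `Q`. -/
def Dominates {n : ℕ} (t : ℕ) (Q P : ProtoDec n) : Prop :=
  ∀ A : Adversary n, Valid t A → ∀ i m, P A i m ≠ none → Q A i m ≠ none

def StrictlyDominates {n : ℕ} (t : ℕ) (Q P : ProtoDec n) : Prop :=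
  Dominates t Q P ∧ ¬ Dominates t P Q

/-- Turn a per-time decision rule into a decision-status function (the first decision
taken is kept forever). -/
def runDec (step : ℕ → Option Bool) : ℕ → Option Bool
  | 0 => step 0
  | m + 1 => (runDec step m).elim (step (m + 1)) some

/-- The protocol `P₀`: decide 0 as soon as `K_i ∃0` holds, otherwise decide 1 at time `t+1`. -/
noncomputable def P0 (n t : ℕ) : ProtoDec n := fun A i =>
  runDec fun m =>
    if Knows t (existsVal false) A i m then some false
    else if m = t + 1 then some true
    else none

/-- The unbeatable protocol `Opt₀`: decide 0 as soon as `K_i ∃0` holds, and decide 1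
as soon as `K_i not-known(∃0)` holds. -/
noncomputable def Opt0 (n t : ℕ) : ProtoDec n := fun A i =>
  runDec fun m =>
    if Knows t (existsVal false) A i m then some false
    else if Knows t (notKnown0 t) A i m then some true
    else none

/-- The number of processes with initial value `false` (0). -/
noncomputable def zeros {n : ℕ} (A : Adversary n) : ℕ :=
  (Finset.univ.filter fun j => A.init j = false).card

/-- The number of processes with initial value `true` (1). -/
noncomputable def ones {n : ℕ} (A : Adversary n) : ℕ :=
  (Finset.univ.filter fun j => A.init j = true).card

/-- The fact `Maj = 0`: at least `n/2` initial values are 0. -/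
def Maj0 (n : ℕ) : Adversary n → ℕ → Prop := fun A _ => n ≤ 2 * zeros A

/-- The fact `Maj = 1`: strictly more than `n/2` initial values are 1. -/
def Maj1 (n : ℕ) : Adversary n → ℕ → Prop := fun A _ => n < 2 * ones A

noncomputable def seenZeros {n : ℕ} (A : Adversary n) (i : Fin n) (m : ℕ) : ℕ :=
  (Finset.univ.filter fun j => Seen A (j, 0) (i, m) ∧ A.init j = false).card

noncomputable def seenOnes {n : ℕ} (A : Adversary n) (i : Fin n) (m : ℕ) : ℕ :=
  (Finset.univ.filter fun j => Seen A (j, 0) (i, m) ∧ A.init j = true).card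

/-- `Maj(vals(i,m))`: 0 if at least half of the initial values known to `i` at `m`
are 0, and 1 otherwise. -/
noncomputable def MajSeen {n : ℕ} (A : Adversary n) (i : Fin n) (m : ℕ) : Bool :=
  if seenOnes A i m ≤ seenZeros A i m then false else true

/-- The unbeatable majority consensus protocol `Opt_Maj`. -/
noncomputable def OptMaj (n t : ℕ) : ProtoDec n := fun A i =>
  runDec fun m =>
    if Knows t (Maj0 n) A i m then some false
    else if Knows t (Maj1 n) A i m then some true
    else if ∃ k ≤ m, RevealedTime A k i m then some (MajSeen A i m)
    else none

/-- The fact `∀1`: all initial values are 1. -/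
def all1 (n : ℕ) : Adversary n → ℕ → Prop := fun A _ => ∀ j, A.init j = true

/-- The sender set of `i` repeats at `⟨i,m⟩`: `i` hears from the same set of processes
in rounds `m-1` and `m` (only meaningful for `m ≥ 2`). -/
def senderSetRepeats {n : ℕ} (A : Adversary n) (i : Fin n) (m : ℕ) : Prop :=
  ∀ j, (A.F (m - 2) j i ↔ A.F (m - 1) j i)

/-- The protocol `P0_opt` of Halpern, Moses and Waarts. -/
noncomputable def P0opt (n t : ℕ) : ProtoDec n := fun A i =>
  runDec fun m =>
    if Knows t (existsVal false) A i m then some false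
    else if Knows t (all1 n) A i m ∨ (2 ≤ m ∧ senderSetRepeats A i m) then some true
    else none

/-- The fact `∃correct(v)`: some correct (never-failing) process knows `∃v`. -/
def ExistsCorrectKnows {n : ℕ} (t : ℕ) (v : Bool) : Adversary n → ℕ → Prop :=
  fun A m => ∃ j, ¬ A.Faulty j ∧ Knows t (existsVal v) A j m

/-- The number `d` of failures process `i` knows of at time `m`: the number of
processes `j ≠ i` from which `i` receives no message in round `m`. -/
noncomputable def knownFaults {n : ℕ} (A : Adversary n) (i : Fin n) : ℕ → ℕ
  | 0 => 0
  | m + 1 => (Finset.univ.filter fun j => j ≠ i ∧ ¬ A.F m j i).card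

/-- The protocol `u-P₀` for uniform consensus: decide 0 as soon as
`K_i ∃correct(0)` holds, otherwise decide 1 at time `t+1`. -/
noncomputable def uP0 (n t : ℕ) : ProtoDec n := fun A i =>
  runDec fun m =>
    if Knows t (ExistsCorrectKnows t false) A i m then some false
    else if m = t + 1 then some true
    else none

/-- The unbeatable uniform consensus protocol `u-Opt₀`. -/
noncomputable def uOpt0 (n t : ℕ) : ProtoDec n := fun A i =>
  runDec fun m =>
    if Knows t (ExistsCorrectKnows t false) A i m then some false
    else if ¬ Knows t (existsVal false) A i m ∧ ∃ k ≤ m, RevealedTime A k i m then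
      some true
    else none

/-- All decisions in the run `P[A]` are taken at or before time `m`. -/
def AllDecidedBy {n : ℕ} (P : ProtoDec n) (A : Adversary n) (m : ℕ) : Prop :=
  ∀ i k, P A i k ≠ none → P A i m ≠ none

/-- `Q` last-decider dominates `P`. -/
def LDDominates {n : ℕ} (t : ℕ) (Q P : ProtoDec n) : Prop :=
  ∀ A : Adversary n, Valid t A → ∀ m, AllDecidedBy P A m → AllDecidedBy Q A m

/-- A 0-chain for `⟨i,m⟩`: distinct processes `j₀,…,j_d = i` with `d ≤ m`, `j₀` having
initial value 0, and `j_k` receiving a message from `j_{k-1}` at time `k` (round `k`). -/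
def ZeroChain {n : ℕ} (A : Adversary n) (i : Fin n) (m : ℕ) : Prop :=
  ∃ d ≤ m, ∃ js : ℕ → Fin n, js d = i ∧
    (∀ k ≤ d, ∀ l ≤ d, js k = js l → k = l) ∧
    A.init (js 0) = false ∧
    ∀ k, 1 ≤ k → k ≤ d → A.F (k - 1) (js (k - 1)) (js k)

section Aux

variable {n : ℕ}

lemma seen_mono {A B : Adversary n} (h : ∀ k j j', A.F k j j' → B.F k j j') :
    ∀ {p q}, Seen A p q → Seen B p q := by
  intro p q hs
  induction hs with
  | refl => exact .refl _
  | self _ ih => exact .self ih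
  | step _ hF ih => exact .step ih (h _ _ _ hF)

lemma seen_congr {A B : Adversary n} (h : ∀ k j j', A.F k j j' ↔ B.F k j j')
    {p q} : Seen A p q ↔ Seen B p q :=
  ⟨seen_mono fun k j j' => (h k j j').mp, seen_mono fun k j j' => (h k j j').mpr⟩

lemma seen_snd_le {A : Adversary n} : ∀ {p q}, Seen A p q → p.2 ≤ q.2 := by
  intro p q hs
  induction hs with
  | refl => exact le_refl _
  | self _ ih => exact ih.trans (Nat.le_succ _)
  | step _ _ ih => exact ih.trans (Nat.le_succ _)

lemma seen_eq_of_snd {A : Adversary n} {p q} (hs : Seen A p q) (h : p.2 = q.2) : p = q := by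
  cases hs with
  | refl => rfl
  | self hs => have := seen_snd_le hs; simp at h; omega
  | step hs _ => have := seen_snd_le hs; simp at h; omega

lemma seen_trans {A : Adversary n} {p q r} (h1 : Seen A p q) (h2 : Seen A q r) :
    Seen A p r := by
  induction h2 with
  | refl => exact h1
  | self _ ih => exact .self ih
  | step _ hF ih => exact .step ih hF

lemma seen_no_out {A : Adversary n} {p : Fin n} {k : ℕ}
    (h : ∀ l y, k ≤ l → ¬ A.F l p y) :
    ∀ {q}, Seen A (p, k) q → q.1 = p ∧ k ≤ q.2 := by
  intro q hs
  induction hs with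
  | refl => exact ⟨rfl, le_refl _⟩
  | self _ ih => exact ⟨ih.1, ih.2.trans (Nat.le_succ _)⟩
  | @step j i m hs hF ih =>
      exact absurd hF (by rw [show j = p from ih.1] at hF ⊢; exact h m i ih.2)

lemma crashed_no_out {A : Adversary n} {p : Fin n} {k : ℕ} (h : A.crash p ≤ (k : ℕ∞)) :
    ∀ l y, k ≤ l → ¬ A.F l p y := by
  intro l y hl
  apply A.after_crash
  calc A.crash p ≤ (k : ℕ∞) := h
    _ ≤ (l : ℕ∞) := by exact_mod_cast hl
    _ < ((l + 1 : ℕ) : ℕ∞) := by exact_mod_cast Nat.lt_succ_self l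

lemma seen_through {A : Adversary n} {k : ℕ} :
    ∀ {p q}, Seen A p q → p.2 ≤ k → k ≤ q.2 →
      ∃ x, Seen A p (x, k) ∧ Seen A (x, k) q := by
  intro p q hs
  induction hs with
  | refl => intro h1 h2
            have : k = p.2 := le_antisymm h2 h1
            exact ⟨p.1, by rw [this]; exact Seen.refl p, by rw [this]; exact Seen.refl p⟩
  | @self i m hs ih =>
      intro h1 h2
      rcases Nat.lt_or_ge k (m + 1) with hk | hk
      · obtain ⟨x, hx1, hx2⟩ := ih h1 (by omega)
        exact ⟨x, hx1, .self hx2⟩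
      · have : k = m + 1 := by omega
        subst this
        exact ⟨i, .self hs, .refl _⟩
  | @step j i m hs hF ih =>
      intro h1 h2
      rcases Nat.lt_or_ge k (m + 1) with hk | hk
      · obtain ⟨x, hx1, hx2⟩ := ih h1 (by omega)
        exact ⟨x, hx1, .step hx2 hF⟩
      · have : k = m + 1 := by omega
        subst this
        exact ⟨i, .step hs hF, .refl _⟩

lemma seen_zero_inv {A : Adversary n} {p} {i : Fin n} (h : Seen A p (i, 0)) : p = (i, 0) := by
  cases h with
  | refl => rfl

lemma seen_succ_inv {A : Adversary n} {p} {i : Fin n} {m : ℕ} (h : Seen A p (i, m + 1)) :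
    p = (i, m + 1) ∨ Seen A p (i, m) ∨ ∃ j, Seen A p (j, m) ∧ A.F m j i := by
  cases h with
  | refl => exact Or.inl rfl
  | self h => exact Or.inr (Or.inl h)
  | step h hF => exact Or.inr (Or.inr ⟨_, h, hF⟩)

lemma sameView_refl (A : Adversary n) (i : Fin n) (m : ℕ) : sameView A A i m :=
  ⟨fun _ => Iff.rfl, fun _ _ => rfl, fun _ _ _ _ => Iff.rfl⟩

lemma knows_self {t : ℕ} {φ : Adversary n → ℕ → Prop} {A : Adversary n} {i m}
    (hK : Knows t φ A i m) (hV : Valid t A) (hA : A.Active i m) : φ A m :=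
  hK A hV ⟨hA, hA, sameView_refl A i m⟩

lemma active_of_not_knows {t : ℕ} {φ : Adversary n → ℕ → Prop} {A : Adversary n} {i m}
    (h : ¬ Knows t φ A i m) : A.Active i m := by
  by_contra hA
  exact h fun B _ hL => absurd hL.1 hA

lemma knows_of_seen_zero {t : ℕ} {A : Adversary n} {q i : Fin n} {m : ℕ}
    (hs : Seen A (q, 0) (i, m)) (h0 : A.init q = false) :
    Knows t (existsVal false) A i m := by
  intro B _ hL
  exact ⟨q, by rw [← hL.2.2.2.1 q hs]; exact h0⟩

/-- flip all initial values outside the view of `(i,m)` to `true`. -/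
noncomputable def flip0 (A : Adversary n) (i : Fin n) (m : ℕ) : Adversary n where
  init := fun q => if Seen A (q, 0) (i, m) then A.init q else true
  F := A.F
  crash := A.crash
  crash_pos := A.crash_pos
  before_crash := A.before_crash
  after_crash := A.after_crash

lemma seen_zero_of_knows {t : ℕ} {A : Adversary n} {i : Fin n} {m : ℕ}
    (hV : Valid t A) (hA : A.Active i m) (hK : Knows t (existsVal false) A i m) :
    ∃ q, Seen A (q, 0) (i, m) ∧ A.init q = false := by
  have hVf : Valid t (flip0 A i m) := hV
  have hsame : sameLocal A (flip0 A i m) i m := by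
    refine ⟨hA, hA, fun p => seen_congr (A := A) (B := flip0 A i m) fun _ _ _ => Iff.rfl, fun j hj => ?_, fun _ _ _ _ => Iff.rfl⟩
    simp only [flip0, if_pos hj]
  obtain ⟨q, hq⟩ := hK (flip0 A i m) hVf hsame
  simp only [flip0] at hq
  by_cases hs : Seen A (q, 0) (i, m)
  · rw [if_pos hs] at hq; exact ⟨q, hs, hq⟩
  · rw [if_neg hs] at hq; simp at hq

lemma revealedTime_transfer {A B : Adversary n} {k : ℕ} {i : Fin n} {m : ℕ}
    (hv : sameView A B i m) (h : RevealedTime A k i m) : RevealedTime B k i m := by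
  intro j'
  rcases h j' with hseen | ⟨i', k₀, hk, hsi', hnF⟩
  · exact Or.inl ((hv.1 _).mp hseen)
  · exact Or.inr ⟨i', k₀, hk, (hv.1 _).mp hsi',
      fun hF => hnF ((hv.2.2 k₀ j' i' hsi').mpr hF)⟩

/-- KEY: if `i` is active, has not seen a 0, and some time `k ≤ m` is revealed to
`(i,m)`, then `i` knows that no active process knows `∃0`. -/
lemma knows_notKnown0_key {t : ℕ} {A : Adversary n} {i : Fin n} {m k : ℕ}
    (hA : A.Active i m)
    (hno0 : ∀ q, Seen A (q, 0) (i, m) → A.init q ≠ false)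
    (hrev : RevealedTime A k i m) (hkm : k ≤ m) :
    Knows t (notKnown0 t) A i m := by
  intro B hVB hL j hj hKj
  obtain ⟨q, hsq, hq0⟩ := seen_zero_of_knows hVB hj hKj
  have hrevB := revealedTime_transfer hL.2.2 hrev
  obtain ⟨x, hqx, hxj⟩ := seen_through hsq (Nat.zero_le k) hkm
  rcases hrevB x with hseen | ⟨i', k₀, hk, hsi', hnF⟩
  · have h1 : Seen B (q, 0) (i, m) := seen_trans hqx hseen
    have h2 : Seen A (q, 0) (i, m) := (hL.2.2.1 _).mpr h1
    exact hno0 q h2 (by rw [hL.2.2.2.1 q h2]; exact hq0)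
  · have hcr : B.crash x ≤ (k : ℕ∞) := by
      subst hk
      by_contra hlt
      exact hnF (B.before_crash k₀ x i' (lt_of_not_ge hlt))
    obtain ⟨hjx, _⟩ := seen_no_out (crashed_no_out hcr) hxj
    have hjx' : j = x := hjx
    have hact : ((m : ℕ) : ℕ∞) < B.crash j := hj
    rw [hjx'] at hact
    have : ((m : ℕ) : ℕ∞) < ((k : ℕ) : ℕ∞) := lt_of_lt_of_le hact hcr
    have : m < k := by exact_mod_cast this
    omega

lemma knows_notKnown0_of_knows_all1 {t : ℕ} {A : Adversary n} {i : Fin n} {k : ℕ}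
    (h : Knows t (all1 n) A i k) : Knows t (notKnown0 t) A i k := by
  intro B hVB hL j hj hKj
  have h1 : all1 n B k := h B hVB hL
  obtain ⟨q, hq⟩ := knows_self hKj hVB hj
  rw [h1 q] at hq
  simp at hq

lemma revealedTime_of_repeats {A : Adversary n} {i : Fin n} {k : ℕ}
    (h2 : 2 ≤ k) (hrep : senderSetRepeats A i k) : RevealedTime A (k - 1) i k := by
  intro j'
  by_cases hF : A.F (k - 1) j' i
  · left
    have h := Seen.step (.refl (j', k - 1)) hF
    rwa [show k - 1 + 1 = k by omega] at h
  · right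
    refine ⟨i, k - 2, by omega, ?_, fun h => hF ((hrep j').mp h)⟩
    have h : Seen A (i, k - 1) (i, k) := by
      have h' : Seen A (i, k - 1) (i, k - 1 + 1) := .self (.refl _)
      rwa [show k - 1 + 1 = k by omega] at h'
    rwa [show k - 2 + 1 = k - 1 by omega]

lemma runDec_none_iff (s : ℕ → Option Bool) (m : ℕ) :
    runDec s m = none ↔ ∀ k ≤ m, s k = none := by
  induction m with
  | zero => simp [runDec]
  | succ m ih =>
      rcases h : runDec s m with _ | v
      · simp only [runDec, h, Option.elim]
        constructor
        · intro hsm k hk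
          rcases Nat.lt_or_ge k (m + 1) with h' | h'
          · exact ih.mp h k (by omega)
          · rwa [show k = m + 1 by omega]
        · intro hall; exact hall (m + 1) le_rfl
      · simp only [runDec, h, Option.elim]
        constructor
        · intro h'; cases h'
        · intro hall
          have := ih.mpr fun k hk => hall k (by omega)
          rw [h] at this; cases this

lemma runDec_of_none_lt {s : ℕ → Option Bool} {m : ℕ} (h : ∀ k < m, s k = none) :
    runDec s m = s m := by
  cases m with
  | zero => rfl
  | succ m =>
      have : runDec s m = none := (runDec_none_iff s m).mpr fun k hk => h k (by omega)
      simp [runDec, this]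

/-- If `B` differs from `A` only by possibly adding the single edge `(0,p,x)` and by
initial values at `p`, where `p` is silent in `A`, and `(x,1)` is not in the view of
`(i,m)` in `B`, then `(i,m)` has the same view in the two adversaries. -/
lemma sameView_of_add {A B : Adversary n} {p x i : Fin n} {m : ℕ}
    (hinit : ∀ q, q ≠ p → A.init q = B.init q)
    (hF : ∀ k j j', ¬(k = 0 ∧ j = p ∧ j' = x) → (A.F k j j' ↔ B.F k j j'))
    (hnoA : ∀ l y, ¬ A.F l p y)
    (hnb : ¬ Seen B (x, 1) (i, m))
    (hpi : p ≠ i) :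
    sameView A B i m := by
  have hmono : ∀ k j j', A.F k j j' → B.F k j j' := by
    intro k j j' h
    by_cases hc : k = 0 ∧ j = p ∧ j' = x
    · rw [hc.2.1] at h; exact absurd h (hnoA k j')
    · exact (hF k j j' hc).mp h
  have hback : ∀ {q r}, Seen B q r → ¬ Seen B (x, 1) r → Seen A q r := by
    intro q r h
    induction h with
    | refl => intro _; exact .refl _
    | @self i' m' h ih => intro hn; exact .self (ih fun hs => hn (.self hs))
    | @step j i' m' h hFe ih =>
        intro hn
        by_cases hc : m' = 0 ∧ j = p ∧ i' = x
        · exact absurd (by rw [hc.2.2, hc.1]; exact .refl _) hn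
        · exact .step (ih fun hs => hn (.step hs hFe)) ((hF _ _ _ hc).mpr hFe)
  refine ⟨fun q => ⟨seen_mono hmono, fun h => hback h hnb⟩, ?_, ?_⟩
  · intro j hs
    by_cases hj : j = p
    · subst hj
      exact absurd ((seen_no_out (fun l y _ => hnoA l y) hs).1).symm hpi
    · exact hinit j hj
  · intro k j j' hs
    by_cases hc : k = 0 ∧ j = p ∧ j' = x
    · obtain ⟨hk0, -, hjx⟩ := hc
      subst hk0; subst hjx
      exact absurd (seen_mono hmono hs) hnb
    · exact hF k j j' hc

/-- `Opt₀` dominates `P0_opt`. -/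
lemma opt0_dominates_P0opt (t : ℕ) : Dominates t (Opt0 n t) (P0opt n t) := by
  intro A hV i m hP
  simp only [P0opt] at hP
  simp only [Opt0]
  rw [Ne, runDec_none_iff] at hP ⊢
  push_neg at hP ⊢
  obtain ⟨k, hk, hs⟩ := hP
  refine ⟨k, hk, ?_⟩
  by_cases hK0 : Knows t (existsVal false) A i k
  · simp [hK0]
  · have hs' : Knows t (all1 n) A i k ∨ (2 ≤ k ∧ senderSetRepeats A i k) := by
      by_contra h
      exact hs (by simp [hK0, h])
    have hN : Knows t (notKnown0 t) A i k := by
      rcases hs' with h1 | ⟨h2, hrep⟩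
      · exact knows_notKnown0_of_knows_all1 h1
      · have hact : A.Active i k := active_of_not_knows hK0
        have hno0 : ∀ q, Seen A (q, 0) (i, k) → A.init q ≠ false :=
          fun q hsq h0 => hK0 (knows_of_seen_zero hsq h0)
        exact knows_notKnown0_key hact hno0 (revealedTime_of_repeats h2 hrep) (by omega)
    simp [hK0, hN]

end Aux
section Witness

variable {n t : ℕ}

/-- crash times of the witnessing adversary. -/
noncomputable def crN (t v : ℕ) : ℕ∞ :=
  if t ≤ v then ⊤ else if v = 0 then 1 else if v ≤ 2 then 2 else ((v + 1 : ℕ) : ℕ∞)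

lemma lt_crN {a v : ℕ} (h3 : 3 ≤ t) :
    ((a : ℕ) : ℕ∞) < crN t v ↔
      (t ≤ v ∨ (v = 0 ∧ a < 1) ∨ (1 ≤ v ∧ v ≤ 2 ∧ a < 2) ∨ (3 ≤ v ∧ v < t ∧ a < v + 1)) := by
  unfold crN
  split_ifs with h1 h2 h4
  · exact iff_of_true (ENat.coe_lt_top a) (Or.inl h1)
  · rw [show (1 : ℕ∞) = ((1 : ℕ) : ℕ∞) by norm_cast, ENat.coe_lt_coe]; omega
  · rw [show (2 : ℕ∞) = ((2 : ℕ) : ℕ∞) by norm_cast, ENat.coe_lt_coe]; omega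
  · rw [ENat.coe_lt_coe]; omega

lemma crN_ne_top {v : ℕ} : crN t v ≠ ⊤ ↔ v < t := by
  unfold crN
  split_ifs with h1 h2 h4
  · exact iff_of_false (by simp) (by omega)
  · exact iff_of_true (ENat.coe_ne_top 1) (by omega)
  · exact iff_of_true (ENat.coe_ne_top 2) (by omega)
  · exact iff_of_true (ENat.coe_ne_top _) (by omega)

def spA (n m : ℕ) (j i : Fin n) : Prop :=
  m = 1 ∧ ((j.val = 1 ∧ i.val = n - 1) ∨ (j.val = 2 ∧ i.val ≠ n - 1))

def spB (n x m : ℕ) (j i : Fin n) : Prop :=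
  spA n m j i ∨ (m = 0 ∧ j.val = 0 ∧ i.val = x)

lemma spA_hsp (h3 : 3 ≤ t) :
    ∀ (m : ℕ) (j i : Fin n), spA n m j i → ((m + 1 : ℕ) : ℕ∞) = crN t j.val := by
  rintro m j i ⟨rfl, h | h⟩ <;>
    · rw [h.1]
      unfold crN
      rw [if_neg (by omega), if_neg (by omega), if_pos (by omega)]
      norm_cast

lemma spB_hsp (h3 : 3 ≤ t) {x : ℕ} :
    ∀ (m : ℕ) (j i : Fin n), spB n x m j i → ((m + 1 : ℕ) : ℕ∞) = crN t j.val := by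
  rintro m j i (h | ⟨rfl, hj, _⟩)
  · exact spA_hsp h3 m j i h
  · rw [hj]
    unfold crN
    rw [if_neg (by omega), if_pos (by omega)]
    norm_cast

/-- the adversary with crash pattern `crN` and crash-round deliveries `sp`. -/
noncomputable def mkAdv (n t : ℕ) (init : Fin n → Bool) (sp : ℕ → Fin n → Fin n → Prop)
    (hsp : ∀ (m : ℕ) (j i : Fin n), sp m j i → ((m + 1 : ℕ) : ℕ∞) = crN t j.val) :
    Adversary n where
  init := init
  F := fun m j i => ((m + 1 : ℕ) : ℕ∞) < crN t j.val ∨ sp m j i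
  crash := fun j => crN t j.val
  crash_pos := by
    intro j
    show (1 : ℕ∞) ≤ crN t j.val
    unfold crN
    split_ifs
    · exact le_top
    · exact le_refl _
    · exact one_le_two
    · exact_mod_cast Nat.one_le_iff_ne_zero.mpr (by omega)
  before_crash := fun m j i h => Or.inl h
  after_crash := by
    rintro m j i h (h' | h')
    · exact absurd h (lt_asymm h')
    · rw [hsp m j i h'] at h; exact lt_irrefl _ h

noncomputable def advA (n t : ℕ) (h3 : 3 ≤ t) : Adversary n :=
  mkAdv n t (fun _ => true) (spA n) (spA_hsp h3)

noncomputable def advB (n t x : ℕ) (h3 : 3 ≤ t) : Adversary n :=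
  mkAdv n t (fun j => if j.val = 0 then false else true) (spB n x) (spB_hsp h3)

variable {h3 : 3 ≤ t}

lemma advA_F {m : ℕ} {j i : Fin n} :
    (advA n t h3).F m j i ↔ (((m + 1 : ℕ) : ℕ∞) < crN t j.val ∨ spA n m j i) := Iff.rfl

lemma advB_F {x m : ℕ} {j i : Fin n} :
    (advB n t x h3).F m j i ↔ (((m + 1 : ℕ) : ℕ∞) < crN t j.val ∨ spB n x m j i) := Iff.rfl

lemma advA_init {j : Fin n} : (advA n t h3).init j = true := rfl

lemma mkAdv_numFaults (hn : t ≤ n) {init sp hsp} :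
    (mkAdv n t init sp hsp).numFaults = t := by
  have h1 : {j : Fin n | (mkAdv n t init sp hsp).Faulty j} = {j : Fin n | j.val < t} := by
    ext j
    simp only [Set.mem_setOf_eq, Adversary.Faulty, mkAdv]
    exact crN_ne_top
  rw [Adversary.numFaults, h1]
  have h2 : {j : Fin n | j.val < t} =
      ↑((Finset.univ : Finset (Fin n)).filter fun j => j.val < t) := by
    ext j; simp
  rw [h2, Set.ncard_coe_finset]
  have h4 : (Finset.univ.filter fun j : Fin n => j.val < t) =
      Finset.map (Fin.castLEEmb hn) Finset.univ := by
    ext j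
    simp only [Finset.mem_filter, Finset.mem_univ, true_and, Finset.mem_map]
    constructor
    · intro hj; exact ⟨⟨j.val, hj⟩, by ext; simp⟩
    · rintro ⟨a, -, rfl⟩
      simpa using a.isLt
  rw [h4, Finset.card_map, Finset.card_univ, Fintype.card_fin]

lemma advA_numFaults (hn : t + 2 ≤ n) : (advA n t h3).numFaults = t :=
  mkAdv_numFaults (by omega)

lemma advA_valid (hn : t + 2 ≤ n) : Valid t (advA n t h3) :=
  le_of_eq (advA_numFaults hn)

lemma advB_valid (hn : t + 2 ≤ n) {x : ℕ} : Valid t (advB n t x h3) :=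
  le_of_eq (mkAdv_numFaults (by omega))

lemma advA_not_faulty {i : Fin n} : ¬ (advA n t h3).Faulty i ↔ t ≤ i.val := by
  simp only [Adversary.Faulty, advA, mkAdv, not_not, not_iff_comm, crN_ne_top]
  omega

lemma crN_top {v : ℕ} (h : t ≤ v) : crN t v = ⊤ := if_pos h

lemma advA_active {i : Fin n} (hi : t ≤ i.val) (m : ℕ) : (advA n t h3).Active i m := by
  show ((m : ℕ) : ℕ∞) < crN t i.val
  rw [crN_top hi]; exact ENat.coe_lt_top m

lemma advB_active {x : ℕ} {i : Fin n} (hi : t ≤ i.val) (m : ℕ) :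
    (advB n t x h3).Active i m := by
  show ((m : ℕ) : ℕ∞) < crN t i.val
  rw [crN_top hi]; exact ENat.coe_lt_top m

lemma advA_silent {j : Fin n} (hj : j.val = 0) (l : ℕ) (y : Fin n) :
    ¬ (advA n t h3).F l j y := by
  rw [advA_F, lt_crN h3]
  unfold spA
  omega

lemma advB_silent1 {x : ℕ} {j : Fin n} (hj : j.val = 0) (l : ℕ) (y : Fin n) (hl : 1 ≤ l) :
    ¬ (advB n t x h3).F l j y := by
  rw [advB_F, lt_crN h3]
  unfold spB spA
  omega

lemma advB_active' {x m : ℕ} {j : Fin n} (h : t ≤ j.val ∨ (j.val = 0 ∧ m < 1) ∨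
    (1 ≤ j.val ∧ j.val ≤ 2 ∧ m < 2) ∨ (3 ≤ j.val ∧ j.val < t ∧ m < j.val + 1)) :
    (advB n t x h3).Active j m := by
  show ((m : ℕ) : ℕ∞) < crN t j.val
  rw [lt_crN h3]
  exact h

lemma advA_advB_sameLocal (hn : t + 2 ≤ n) {x : ℕ} (hx : x < n) {i : Fin n} (hi : t ≤ i.val)
    {m : ℕ} (hnb : ¬ Seen (advB n t x h3) ((⟨x, hx⟩ : Fin n), 1) (i, m)) :
    sameLocal (advA n t h3) (advB n t x h3) i m := by
  refine ⟨advA_active hi m, advB_active hi m,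
    sameView_of_add (p := (⟨0, by omega⟩ : Fin n)) ?_ ?_ (advA_silent rfl) hnb ?_⟩
  · intro q hq
    show (true : Bool) = if q.val = 0 then false else true
    rw [if_neg fun h => hq (Fin.ext h)]
  · intro k j j' hc
    rw [advA_F, advB_F]
    unfold spB
    constructor
    · rintro (h | h)
      exacts [Or.inl h, Or.inr (Or.inl h)]
    · rintro (h | h | ⟨hk, hj, hj'⟩)
      exacts [Or.inl h, Or.inr h, absurd ⟨hk, Fin.ext hj, Fin.ext hj'⟩ hc]
  · intro h
    rw [← h] at hi
    have h0 : t ≤ 0 := hi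
    omega

lemma not_knows_ex0 (hn : t + 2 ≤ n) {i : Fin n} (hi : t ≤ i.val) (m : ℕ) :
    ¬ Knows t (existsVal false) (advA n t h3) i m := by
  intro h
  obtain ⟨j, hj⟩ := knows_self h (advA_valid hn) (advA_active hi m)
  rw [advA_init] at hj
  cases hj

lemma nb0 (hn : t + 2 ≤ n) {i : Fin n} (hi : t ≤ i.val) (m : ℕ) :
    ¬ Seen (advB n t 0 h3) ((⟨0, by omega⟩ : Fin n), 1) (i, m) := by
  intro h
  have h1 := (seen_no_out (fun l y hl => advB_silent1 rfl l y hl) h).1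
  have h2 : t ≤ 0 := by
    have : i = (⟨0, by omega⟩ : Fin n) := h1
    rw [this] at hi; exact hi
  omega

lemma not_knows_all1 (hn : t + 2 ≤ n) {i : Fin n} (hi : t ≤ i.val) (m : ℕ) :
    ¬ Knows t (all1 n) (advA n t h3) i m := by
  intro h
  have hsl := advA_advB_sameLocal (h3 := h3) hn (by omega) hi (nb0 hn hi m)
  have h1 := h (advB n t 0 h3) (advB_valid hn) hsl
  have h2 := h1 (⟨0, by omega⟩ : Fin n)
  have h3' : (if ((⟨0, by omega⟩ : Fin n) : Fin n).val = 0 then false else true) = true := h2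
  rw [if_pos rfl] at h3'
  cases h3'

lemma F1B_not {x : ℕ} {j i : Fin n} (hj : 1 ≤ j.val) (hj2 : j.val ≤ 2)
    (hcond : ¬ spA n 1 j i) : ¬ (advB n t x h3).F 1 j i := by
  rw [advB_F]
  rintro (h | h | h)
  · rw [lt_crN h3] at h; omega
  · exact hcond h
  · omega

lemma nbx2 (hn : t + 2 ≤ n) {x : ℕ} (hx : x < n) (hx2 : 1 ≤ x) (hx3 : x ≤ 2)
    {i : Fin n} (hi : t ≤ i.val)
    (hF1 : ¬ (advB n t x h3).F 1 (⟨x, hx⟩ : Fin n) i) :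
    ¬ Seen (advB n t x h3) ((⟨x, hx⟩ : Fin n), 1) (i, 2) := by
  intro h
  rcases seen_succ_inv h with he | hs | ⟨j, hs, hF⟩
  · have := congrArg Prod.snd he
    simp at this
  · have h2 := seen_eq_of_snd hs rfl
    have h3' : i = (⟨x, hx⟩ : Fin n) := ((Prod.ext_iff.mp h2).1).symm
    have : t ≤ x := by rw [h3'] at hi; exact hi
    omega
  · have h2 := seen_eq_of_snd hs rfl
    have h3' : (⟨x, hx⟩ : Fin n) = j := (Prod.ext_iff.mp h2).1
    rw [← h3'] at hF
    exact hF1 hF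

lemma not_knows_nk0_0 (hn : t + 2 ≤ n) {i : Fin n} (hi : t ≤ i.val) :
    ¬ Knows t (notKnown0 t) (advA n t h3) i 0 := by
  intro h
  have hsl := advA_advB_sameLocal (h3 := h3) hn (by omega) hi (nb0 hn hi 0)
  have h1 := h (advB n t 0 h3) (advB_valid hn) hsl
  have hp0 : ((⟨0, by omega⟩ : Fin n) : Fin n).val = 0 := rfl
  refine h1 (⟨0, by omega⟩ : Fin n) (advB_active' (by omega)) ?_
  refine knows_of_seen_zero (.refl _) ?_
  show (if ((⟨0, by omega⟩ : Fin n) : Fin n).val = 0 then false else true) = false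
  rw [if_pos rfl]

lemma advB_F01 (hn : t + 2 ≤ n) {x : ℕ} (hx : x < n) :
    (advB n t x h3).F 0 (⟨0, by omega⟩ : Fin n) (⟨x, hx⟩ : Fin n) := by
  rw [advB_F]
  exact Or.inr (Or.inr ⟨rfl, rfl, rfl⟩)

lemma not_knows_nk0_1 (hn : t + 2 ≤ n) {i : Fin n} (hi : t ≤ i.val) :
    ¬ Knows t (notKnown0 t) (advA n t h3) i 1 := by
  intro h
  have hx : (1 : ℕ) < n := by omega
  have hnb : ¬ Seen (advB n t 1 h3) ((⟨1, hx⟩ : Fin n), 1) (i, 1) := by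
    intro hs
    have h2 := seen_eq_of_snd hs rfl
    have h3' : i = (⟨1, hx⟩ : Fin n) := ((Prod.ext_iff.mp h2).1).symm
    have : t ≤ 1 := by rw [h3'] at hi; exact hi
    omega
  have hsl := advA_advB_sameLocal (h3 := h3) hn hx hi hnb
  have h1 := h (advB n t 1 h3) (advB_valid hn) hsl
  refine h1 (⟨1, hx⟩ : Fin n) (advB_active' (by have hv : ((⟨1, hx⟩ : Fin n) : Fin n).val = 1 := rfl; omega)) ?_
  refine knows_of_seen_zero (.step (.refl _) (advB_F01 hn hx)) ?_
  show (if ((⟨0, by omega⟩ : Fin n) : Fin n).val = 0 then false else true) = false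
  rw [if_pos rfl]

lemma not_knows_nk0_2 (hn : t + 2 ≤ n) {i : Fin n} (hi : t ≤ i.val) :
    ¬ Knows t (notKnown0 t) (advA n t h3) i 2 := by
  intro h
  by_cases hne : i.val = n - 1
  · -- use `advB 2`: the hidden 0 travels p₀ → p₂ → p₃
    have hx : (2 : ℕ) < n := by omega
    have hx3 : (3 : ℕ) < n := by omega
    have hF1 : ¬ (advB n t 2 h3).F 1 (⟨2, hx⟩ : Fin n) i := by
      refine F1B_not (by exact Nat.le_succ 1) (by exact Nat.le_refl 2) ?_
      rintro ⟨-, ⟨hj, -⟩ | ⟨-, hv⟩⟩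
      · have : (2 : ℕ) = 1 := hj; omega
      · exact hv hne
    have hsl := advA_advB_sameLocal (h3 := h3) hn hx hi (nbx2 hn hx (by omega) (by omega) hi hF1)
    have h1 := h (advB n t 2 h3) (advB_valid hn) hsl
    refine h1 (⟨3, hx3⟩ : Fin n)
      (advB_active' (by have : ((⟨3, hx3⟩ : Fin n) : Fin n).val = 3 := rfl; omega)) ?_
    have hF12 : (advB n t 2 h3).F 1 (⟨2, hx⟩ : Fin n) (⟨3, hx3⟩ : Fin n) := by
      rw [advB_F]
      refine Or.inr (Or.inl ⟨rfl, Or.inr ⟨rfl, ?_⟩⟩)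
      show (3 : ℕ) ≠ n - 1
      omega
    refine knows_of_seen_zero (.step (.step (.refl _) (advB_F01 hn hx)) hF12) ?_
    show (if ((⟨0, by omega⟩ : Fin n) : Fin n).val = 0 then false else true) = false
    rw [if_pos rfl]
  · -- use `advB 1`: the hidden 0 travels p₀ → p₁ → p_{n-1}
    have hx : (1 : ℕ) < n := by omega
    have hxn : n - 1 < n := by omega
    have hF1 : ¬ (advB n t 1 h3).F 1 (⟨1, hx⟩ : Fin n) i := by
      refine F1B_not (by exact Nat.le_refl 1) (by exact Nat.le_succ 1) ?_
      rintro ⟨-, ⟨-, hv⟩ | ⟨hj, -⟩⟩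
      · exact hne hv
      · have : (1 : ℕ) = 2 := hj; omega
    have hsl := advA_advB_sameLocal (h3 := h3) hn hx hi (nbx2 hn hx (by omega) (by omega) hi hF1)
    have h1 := h (advB n t 1 h3) (advB_valid hn) hsl
    refine h1 (⟨n - 1, hxn⟩ : Fin n)
      (advB_active' (by have : ((⟨n - 1, hxn⟩ : Fin n) : Fin n).val = n - 1 := rfl; omega)) ?_
    have hF12 : (advB n t 1 h3).F 1 (⟨1, hx⟩ : Fin n) (⟨n - 1, hxn⟩ : Fin n) := by
      rw [advB_F]
      exact Or.inr (Or.inl ⟨rfl, Or.inl ⟨rfl, rfl⟩⟩)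
    refine knows_of_seen_zero (.step (.step (.refl _) (advB_F01 hn hx)) hF12) ?_
    show (if ((⟨0, by omega⟩ : Fin n) : Fin n).val = 0 then false else true) = false
    rw [if_pos rfl]

lemma advA_rep_t1 (hn : t + 2 ≤ n) {i : Fin n} :
    senderSetRepeats (advA n t h3) i (t + 1) := by
  intro j
  have ht := h3
  rw [advA_F, advA_F, lt_crN h3, lt_crN h3]
  unfold spA
  omega

lemma advA_rep_none (hn : t + 2 ≤ n) {i : Fin n} {m : ℕ} (h2 : 2 ≤ m) (hmt : m ≤ t) :
    ¬ senderSetRepeats (advA n t h3) i m := by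
  intro hrep
  have ht := h3
  rcases Nat.lt_or_ge m 4 with hm4 | hm4
  · by_cases hne : i.val = n - 1
    · rcases Nat.lt_or_ge m 3 with hm3 | hm3
      · -- m = 2, i = n-1 : use j with value 2
        have hx : (2 : ℕ) < n := by omega
        have hj := hrep (⟨2, hx⟩ : Fin n)
        rw [advA_F, advA_F, lt_crN h3, lt_crN h3] at hj
        unfold spA at hj
        have hv : ((⟨2, hx⟩ : Fin n) : Fin n).val = 2 := rfl
        omega
      · -- m = 3, i = n-1 : use j with value 1
        have hx : (1 : ℕ) < n := by omega
        have hj := hrep (⟨1, hx⟩ : Fin n)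
        rw [advA_F, advA_F, lt_crN h3, lt_crN h3] at hj
        unfold spA at hj
        have hv : ((⟨1, hx⟩ : Fin n) : Fin n).val = 1 := rfl
        omega
    · rcases Nat.lt_or_ge m 3 with hm3 | hm3
      · -- m = 2, i ≠ n-1 : use j with value 1
        have hx : (1 : ℕ) < n := by omega
        have hj := hrep (⟨1, hx⟩ : Fin n)
        rw [advA_F, advA_F, lt_crN h3, lt_crN h3] at hj
        unfold spA at hj
        have hv : ((⟨1, hx⟩ : Fin n) : Fin n).val = 1 := rfl
        omega
      · -- m = 3, i ≠ n-1 : use j with value 2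
        have hx : (2 : ℕ) < n := by omega
        have hj := hrep (⟨2, hx⟩ : Fin n)
        rw [advA_F, advA_F, lt_crN h3, lt_crN h3] at hj
        unfold spA at hj
        have hv : ((⟨2, hx⟩ : Fin n) : Fin n).val = 2 := rfl
        omega
  · -- 4 ≤ m ≤ t : use j with value m - 1
    have hx : m - 1 < n := by omega
    have hj := hrep (⟨m - 1, hx⟩ : Fin n)
    rw [advA_F, advA_F, lt_crN h3, lt_crN h3] at hj
    unfold spA at hj
    have hv : ((⟨m - 1, hx⟩ : Fin n) : Fin n).val = m - 1 := rfl
    omega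

lemma advA_revealed2 (hn : t + 2 ≤ n) {i : Fin n} (hi : t ≤ i.val) :
    RevealedTime (advA n t h3) 2 i 3 := by
  have ht := h3
  intro j'
  rcases Nat.lt_or_ge j'.val 3 with hlt | hge
  · right
    by_cases hj2 : j'.val = 2
    · have hxn : n - 1 < n := by omega
      refine ⟨(⟨n - 1, hxn⟩ : Fin n), 1, rfl, .step (.refl _) ?_, ?_⟩
      · rw [advA_F]
        left
        rw [lt_crN h3]
        have hv : ((⟨n - 1, hxn⟩ : Fin n) : Fin n).val = n - 1 := rfl
        omega
      · rw [advA_F, lt_crN h3]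
        unfold spA
        have hv : ((⟨n - 1, hxn⟩ : Fin n) : Fin n).val = n - 1 := rfl
        omega
    · have hx3 : (3 : ℕ) < n := by omega
      refine ⟨(⟨3, hx3⟩ : Fin n), 1, rfl, .step (.refl _) ?_, ?_⟩
      · rw [advA_F]
        left
        rw [lt_crN h3]
        have hv : ((⟨3, hx3⟩ : Fin n) : Fin n).val = 3 := rfl
        omega
      · rw [advA_F, lt_crN h3]
        unfold spA
        have hv : ((⟨3, hx3⟩ : Fin n) : Fin n).val = 3 := rfl
        omega
  · left
    refine .step (.refl _) ?_
    rw [advA_F]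
    left
    rw [lt_crN h3]
    omega

lemma knows_nk0_3 (hn : t + 2 ≤ n) {i : Fin n} (hi : t ≤ i.val) :
    Knows t (notKnown0 t) (advA n t h3) i 3 :=
  knows_notKnown0_key (advA_active hi 3)
    (fun q _ h => by rw [advA_init] at h; cases h)
    (advA_revealed2 hn hi) (by omega)

end Witness
/-- If `3 ≤ t ≤ n-2` then `Opt₀` strictly dominates `P0_opt` (so `P0_opt` is beatable);
moreover there is an adversary with exactly `t` crashes on which every correct process
decides 1 after 3 rounds in `Opt₀` but only after `t+1` rounds in `P0_opt`. -/
theorem opt0_beats_P0opt (n t : ℕ) (h3 : 3 ≤ t) (hn : t + 2 ≤ n) :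
    StrictlyDominates t (Opt0 n t) (P0opt n t) ∧
    ∃ A : Adversary n, Valid t A ∧ A.numFaults = t ∧
      ∀ i : Fin n, ¬ A.Faulty i →
        DecidesAt (Opt0 n t) A i 3 true ∧ DecidesAt (P0opt n t) A i (t + 1) true := by
  have validA : Valid t (advA n t h3) := advA_valid hn
  have hmain : ∀ i : Fin n, ¬ (advA n t h3).Faulty i →
      DecidesAt (Opt0 n t) (advA n t h3) i 3 true ∧
      DecidesAt (P0opt n t) (advA n t h3) i (t + 1) true := by
    intro i hf
    have hi : t ≤ i.val := (advA_not_faulty (h3 := h3)).mp hf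
    have hex := not_knows_ex0 (h3 := h3) hn hi
    constructor
    · -- Opt₀ decides 1 at time 3
      have hs1 : ∀ k < 3, (fun m =>
          if Knows t (existsVal false) (advA n t h3) i m then some false
          else if Knows t (notKnown0 t) (advA n t h3) i m then some true
          else none) k = none := by
        intro k hk
        show (if Knows t (existsVal false) (advA n t h3) i k then some false
          else if Knows t (notKnown0 t) (advA n t h3) i k then some true
          else none) = none
        rw [if_neg (hex k)]
        interval_cases k
        · rw [if_neg (not_knows_nk0_0 hn hi)]
        · rw [if_neg (not_knows_nk0_1 hn hi)]
        · rw [if_neg (not_knows_nk0_2 hn hi)]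
      refine ⟨?_, ?_⟩
      · show runDec _ 3 = some true
        rw [runDec_of_none_lt hs1, if_neg (hex 3), if_pos (knows_nk0_3 hn hi)]
      · intro k hk
        show runDec _ k = none
        rw [runDec_none_iff]
        intro l hl
        exact hs1 l (by omega)
    · -- P0_opt decides 1 only at time t+1
      have hs2 : ∀ k < t + 1, (fun m =>
          if Knows t (existsVal false) (advA n t h3) i m then some false
          else if Knows t (all1 n) (advA n t h3) i m ∨
            (2 ≤ m ∧ senderSetRepeats (advA n t h3) i m) then some true
          else none) k = none := by
        intro k hk
        show (if Knows t (existsVal false) (advA n t h3) i k then some false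
          else if Knows t (all1 n) (advA n t h3) i k ∨
            (2 ≤ k ∧ senderSetRepeats (advA n t h3) i k) then some true
          else none) = none
        rw [if_neg (hex k), if_neg ?_]
        rintro (h | ⟨h2, hrep⟩)
        · exact not_knows_all1 hn hi k h
        · exact advA_rep_none hn h2 (by omega) hrep
      refine ⟨?_, ?_⟩
      · show runDec _ (t + 1) = some true
        rw [runDec_of_none_lt hs2, if_neg (hex (t + 1)),
          if_pos (Or.inr ⟨by omega, advA_rep_t1 hn⟩)]
      · intro k hk
        show runDec _ k = none
        rw [runDec_none_iff]
        intro l hl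
        exact hs2 l (by omega)
  refine ⟨⟨opt0_dominates_P0opt t, ?_⟩, advA n t h3, validA, advA_numFaults hn, hmain⟩
  intro hdom
  have hxn : n - 1 < n := by omega
  have hpn : ¬ (advA n t h3).Faulty (⟨n - 1, hxn⟩ : Fin n) := by
    rw [advA_not_faulty]
    have hv : ((⟨n - 1, hxn⟩ : Fin n) : Fin n).val = n - 1 := rfl
    omega
  obtain ⟨hO, hP⟩ := hmain _ hpn
  have h1 := hdom (advA n t h3) validA (⟨n - 1, hxn⟩ : Fin n) 3 (by rw [hO.1]; simp)
  exact h1 (hP.2 3 (by omega))
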